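/- For every n ≥ 3, the shortest binary word that has exactly n distinct factorizations as a concatenation of two Lyndon words is 00(10)^{n-2}11, which has length 2n. -/

import Mathlib

/-- A Lyndon word: nonempty and strictly smaller than each of its proper
nonempty suffixes in the lexicographic order (with false < true). -/
def LyndonWord (u : List Bool) : Prop :=
  u ≠ [] ∧ ∀ s : List Bool, s <:+ u → s ≠ [] → s ≠ u → u < s

/-- The set of factorizations of `u` into two Lyndon words. -/
def lyndonFacts (u : List Bool) : Set (List Bool × List Bool) :=
  {p | LyndonWord p.1 ∧ LyndonWord p.2 ∧ u = p.1 ++ p.2}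

/-- The word 00(10)^{n-2}11. -/
def wordHML (n : ℕ) : List Bool :=
  [false, false] ++ (List.replicate (n - 2) [true, false]).flatten ++ [true, true]



lemma lt_iff {l1 l2 : List Bool} : l1 < l2 ↔ List.Lex (· < ·) l1 l2 :=
  Iff.rfl

lemma nil_lt {l : List Bool} (h : l ≠ []) : ([] : List Bool) < l := by
  rw [lt_iff]
  cases l with
  | nil => exact absurd rfl h
  | cons a l => exact List.Lex.nil

lemma ft_lt {l1 l2 : List Bool} : (false :: l1) < (true :: l2) := by
  rw [lt_iff]; exact List.Lex.rel (by decide)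

lemma cons_lt (a : Bool) {l1 l2 : List Bool} (h : l1 < l2) : (a :: l1) < (a :: l2) := by
  rw [lt_iff] at *; exact List.Lex.cons h

lemma append_lt (l : List Bool) {l1 l2 : List Bool} (h : l1 < l2) : (l ++ l1) < (l ++ l2) := by
  induction l with
  | nil => simpa
  | cons a l ih => exact cons_lt a ih

lemma not_lt_nil (l : List Bool) : ¬ l < [] := by
  rw [lt_iff]; intro h; cases h

lemma cons_lt_cons_inv {a : Bool} {l1 l2 : List Bool} (h : (a :: l1) < (a :: l2)) : l1 < l2 := by
  rw [lt_iff] at *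
  cases h with
  | rel h => exact absurd h (by cases a <;> decide)
  | cons h => exact h

lemma not_tf_lt {l1 l2 : List Bool} : ¬ (true :: l1) < (false :: l2) := by
  rw [lt_iff]; intro h
  cases h with
  | rel h => exact absurd h (by decide)

lemma prefix_lt (l : List Bool) {r : List Bool} (h : r ≠ []) : l < l ++ r := by
  induction l with
  | nil => simpa using nil_lt h
  | cons a l ih => exact cons_lt a ih

lemma lyndon_single (b : Bool) : LyndonWord [b] := by
  refine ⟨by simp, fun s hs h1 h2 => ?_⟩
  rcases List.suffix_cons_iff.mp hs with h | h
  · exact absurd h h2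
  · simp at h; exact absurd h h1

lemma lyndon_getLast {u : List Bool} (h : LyndonWord u) (h2 : 2 ≤ u.length)
    (hne : u ≠ []) : u.getLast hne = true := by
  by_contra hlast
  have hlast' : u.getLast hne = false := by
    cases hh : u.getLast hne
    · rfl
    · exact absurd hh hlast
  have hsuf : [false] <:+ u := by
    conv_rhs => rw [← List.dropLast_append_getLast hne]
    rw [hlast']
    exact List.suffix_append _ _
  have hlt : u < [false] := h.2 _ hsuf (by simp) (by
    intro he; rw [← he] at h2; simp at h2)
  cases u with
  | nil => exact hne rfl
  | cons a v =>
    cases a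
    · have := cons_lt_cons_inv hlt
      exact not_lt_nil _ this
    · exact not_tf_lt hlt

lemma lyndon_head {u : List Bool} (h : LyndonWord u) (h2 : 2 ≤ u.length)
    (hne : u ≠ []) : u.head hne = false := by
  by_contra hh
  have hh' : u.head hne = true := by
    cases hhh : u.head hne
    · exact absurd hhh hh
    · rfl
  have hlast := lyndon_getLast h h2 hne
  have hsuf : [true] <:+ u := by
    conv_rhs => rw [← List.dropLast_append_getLast hne]
    rw [hlast]
    exact List.suffix_append _ _
  have hlt : u < [true] := h.2 _ hsuf (by simp) (by
    intro he; rw [← he] at h2; simp at h2)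
  cases u with
  | nil => exact hne rfl
  | cons a v =>
    simp at hh'
    subst hh'
    have := cons_lt_cons_inv hlt
    exact not_lt_nil _ this

def rep (m : ℕ) : List Bool := (List.replicate m [false, true]).flatten

lemma rep_zero : rep 0 = [] := rfl

lemma rep_succ (m : ℕ) : rep (m + 1) = false :: true :: rep m := rfl

lemma rep_add (a b : ℕ) : rep (a + b) = rep a ++ rep b := by
  unfold rep
  rw [List.replicate_add, List.flatten_append]

lemma rep_succ' (m : ℕ) : rep (m + 1) = rep m ++ [false, true] := by
  rw [rep_add m 1]; rfl

lemma rep_length (m : ℕ) : (rep m).length = 2 * m := by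
  induction m with
  | zero => rfl
  | succ m ih => rw [rep_succ]; simp [ih]; omega

lemma rep_getElem (m j : ℕ) (h : j < (rep m).length) :
    (rep m)[j] = decide (j % 2 = 1) := by
  induction m generalizing j with
  | zero => simp [rep_zero] at h
  | succ m ih =>
    simp only [rep_succ] at h ⊢
    match j with
    | 0 => simp
    | 1 => simp
    | (j+2) =>
      have h' : j < (rep m).length := by simp at h; omega
      simp only [List.getElem_cons_succ]
      rw [ih j h']
      have : (j + 2) % 2 = j % 2 := Nat.add_mod_right j 2
      rw [this]

lemma suffix_rep {s : List Bool} {m : ℕ} (h : s <:+ rep m) :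
    s = [] ∨ (∃ k, 1 ≤ k ∧ k ≤ m ∧ s = rep k) ∨ (∃ k, k < m ∧ s = true :: rep k) := by
  induction m with
  | zero => left; simpa [rep_zero] using h
  | succ m ih =>
    rw [rep_succ] at h
    rcases List.suffix_cons_iff.mp h with h1 | h1
    · right; left; exact ⟨m + 1, by omega, le_refl _, by rw [h1, rep_succ]⟩
    · rcases List.suffix_cons_iff.mp h1 with h2 | h2
      · right; right; exact ⟨m, by omega, h2⟩
      · rcases ih h2 with h3 | ⟨k, hk1, hk2, h3⟩ | ⟨k, hk, h3⟩
        · left; exact h3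
        · right; left; exact ⟨k, hk1, by omega, h3⟩
        · right; right; exact ⟨k, by omega, h3⟩


lemma suffix_append_singleton {s l : List Bool} {b : Bool} (h : s <:+ l ++ [b]) :
    s = [] ∨ ∃ s', s' <:+ l ∧ s = s' ++ [b] := by
  induction l with
  | nil =>
    rcases List.suffix_cons_iff.mp h with h1 | h1
    · right; exact ⟨[], List.nil_suffix, h1⟩
    · left; simpa using h1
  | cons a l ih =>
    rcases List.suffix_cons_iff.mp h with h1 | h1
    · right; exact ⟨a :: l, List.suffix_refl _, h1⟩
    · rcases ih h1 with h2 | ⟨s', hs', h2⟩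
      · left; exact h2
      · right; exact ⟨s', hs'.trans (List.suffix_cons a l), h2⟩

lemma lyndon_bw (m : ℕ) : LyndonWord (false :: rep m) := by
  refine ⟨by simp, fun s hs h1 h2 => ?_⟩
  rcases List.suffix_cons_iff.mp hs with h | h
  · exact absurd h h2
  · rcases suffix_rep h with h3 | ⟨k, hk1, hk2, h3⟩ | ⟨k, hk, h3⟩
    · exact absurd h3 h1
    · -- s = rep k, 1 ≤ k ≤ m, so m ≥ 1
      obtain ⟨m', rfl⟩ : ∃ m', m = m' + 1 := ⟨m - 1, by omega⟩
      obtain ⟨k', rfl⟩ : ∃ k', k = k' + 1 := ⟨k - 1, by omega⟩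
      rw [h3, rep_succ, rep_succ]
      exact cons_lt false ft_lt
    · rw [h3]
      exact ft_lt

lemma lyndon_aw (m : ℕ) : LyndonWord (rep m ++ [true]) := by
  refine ⟨by simp, fun s hs h1 h2 => ?_⟩
  rcases suffix_append_singleton hs with h | ⟨s', hs', h⟩
  · exact absurd h h1
  · rcases suffix_rep hs' with h3 | ⟨k, hk1, hk2, h3⟩ | ⟨k, hk, h3⟩
    · -- s = [true]
      subst h3
      obtain ⟨m', rfl⟩ : ∃ m', m = m' + 1 := by
        refine ⟨m - 1, ?_⟩
        rcases Nat.eq_zero_or_pos m with h0 | h0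
        · exfalso; apply h2; rw [h, h0]; rfl
        · omega
      rw [h, rep_succ]
      exact ft_lt
    · -- s = rep k ++ [true]
      subst h3
      have hkm : k < m := by
        rcases Nat.lt_or_ge k m with h4 | h4
        · exact h4
        · exfalso; apply h2; rw [h]
          have : k = m := le_antisymm hk2 h4
          rw [this]
      obtain ⟨d, rfl⟩ : ∃ d, m = k + (d + 1) := ⟨m - k - 1, by omega⟩
      rw [h, rep_add, List.append_assoc]
      apply append_lt
      rw [rep_succ]
      exact ft_lt
    · subst h3
      obtain ⟨m', rfl⟩ : ∃ m', m = m' + 1 := ⟨m - 1, by omega⟩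
      rw [h, rep_succ]
      exact ft_lt


lemma flat_tf (m : ℕ) :
    false :: (List.replicate m [true, false]).flatten = rep m ++ [false] := by
  induction m with
  | zero => rfl
  | succ m ih =>
    have h1 : (List.replicate (m+1) [true, false]).flatten
        = true :: false :: (List.replicate m [true, false]).flatten := rfl
    rw [h1, rep_succ, List.cons_append, List.cons_append, ← ih]

lemma wordHML_eq (n : ℕ) (h : 2 ≤ n) :
    wordHML n = false :: (rep (n - 1) ++ [true]) := by
  obtain ⟨m, rfl⟩ : ∃ m, n = m + 2 := ⟨n - 2, by omega⟩
  show ([false, false] ++ (List.replicate m [true, false]).flatten ++ [true, true]) = _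
  have h2 : m + 2 - 1 = m + 1 := by omega
  rw [h2]
  have : [false, false] ++ (List.replicate m [true, false]).flatten ++ [true, true]
      = false :: ((false :: (List.replicate m [true, false]).flatten) ++ [true, true]) := by
    simp
  rw [this, flat_tf, rep_succ']
  simp

lemma w_ne (n : ℕ) : (false :: (rep (n-1) ++ [true])) ≠ [] := by simp

lemma w_length (n : ℕ) (h : 1 ≤ n) :
    (false :: (rep (n - 1) ++ [true])).length = 2 * n := by
  simp [rep_length]; omega

def wchar (n j : ℕ) : Bool :=
  if j = 0 then false else if j = 2 * n - 1 then true else decide (j % 2 = 0)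

lemma w_getElem (n : ℕ) (h : 1 ≤ n) (j : ℕ) (hj : j < (false :: (rep (n-1) ++ [true])).length) :
    (false :: (rep (n - 1) ++ [true]))[j] = wchar n j := by
  have hlen : (false :: (rep (n-1) ++ [true])).length = 2 * n := w_length n h
  match j with
  | 0 => simp [wchar]
  | (j'+1) =>
    simp only [List.getElem_cons_succ]
    have hj' : j' + 1 < 2 * n := by omega
    rcases Nat.lt_or_ge j' (2 * (n - 1)) with hc | hc
    · have hr : j' < (rep (n-1)).length := by rw [rep_length]; exact hc
      rw [List.getElem_append_left hr, rep_getElem _ _ hr]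
      have : j' + 1 ≠ 2 * n - 1 := by omega
      simp only [wchar, if_neg (Nat.succ_ne_zero j'), if_neg this]
      exact decide_eq_decide.mpr (by omega)
    · have hr : (rep (n-1)).length ≤ j' := by rw [rep_length]; exact hc
      rw [List.getElem_append_right hr]
      have hje : j' + 1 = 2 * n - 1 := by omega
      simp [wchar, hje]
      omega

lemma w_split (n k : ℕ) (hk : k < n) :
    (false :: (rep (n - 1) ++ [true]))
      = (false :: rep k) ++ (rep (n - 1 - k) ++ [true]) := by
  have : rep (n - 1) = rep k ++ rep (n - 1 - k) := by
    rw [← rep_add]; congr 1; omega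
  rw [this]; simp

lemma w_take (n k : ℕ) (hk : k < n) :
    (false :: (rep (n - 1) ++ [true])).take (2 * k + 1) = false :: rep k := by
  rw [w_split n k hk]
  exact List.take_left' (by simp [rep_length]; try omega)

lemma w_drop (n k : ℕ) (hk : k < n) :
    (false :: (rep (n - 1) ++ [true])).drop (2 * k + 1) = rep (n - 1 - k) ++ [true] := by
  rw [w_split n k hk]
  exact List.drop_left' (by simp [rep_length]; try omega)


lemma getElem_idx_congr {l : List Bool} {i j : ℕ} (h : i = j) (hi : i < l.length) :
    l[i]'hi = l[j]'(h ▸ hi) := by subst h; rfl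

lemma lyndon_getElem_last {u : List Bool} (h : LyndonWord u) (h2 : 2 ≤ u.length)
    {j : ℕ} (hj : j + 1 = u.length) : u[j]'(by omega) = true := by
  have hne : u ≠ [] := by intro he; rw [he] at h2; simp at h2
  have hl := lyndon_getLast h h2 hne
  rw [List.getLast_eq_getElem] at hl
  rw [getElem_idx_congr (show j = u.length - 1 by omega)]
  exact hl

lemma lyndon_getElem_head {u : List Bool} (h : LyndonWord u) (h2 : 2 ≤ u.length) :
    u[0]'(by omega) = false := by
  have hne : u ≠ [] := by intro he; rw [he] at h2; simp at h2
  have hl := lyndon_head h h2 hne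
  rw [List.head_eq_getElem] at hl
  exact hl

/-- If the prefix of length `p+1` is Lyndon (with `p ≥ 1`), the letter at index `p` is `true`. -/
lemma split_true {u : List Bool} {p : ℕ} (hp : 1 ≤ p) (hpL : p + 1 ≤ u.length)
    (h : LyndonWord (u.take (p+1))) : u[p]'(by omega) = true := by
  have hlen : (u.take (p+1)).length = p + 1 := by simp; omega
  have := lyndon_getElem_last h (by omega) (j := p) (by omega)
  rwa [List.getElem_take] at this

/-- If the suffix from index `p` is Lyndon with length ≥ 2, the letter at index `p` is `false`. -/
lemma split_false {u : List Bool} {p : ℕ} (hpL : p + 2 ≤ u.length)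
    (h : LyndonWord (u.drop p)) : u[p]'(by omega) = false := by
  have hlen : (u.drop p).length = u.length - p := by simp
  have := lyndon_getElem_head h (by omega)
  rw [List.getElem_drop] at this
  rwa [getElem_idx_congr (show p = p + 0 by omega)]

/-- If the suffix from index `p` is Lyndon with length ≥ 2, the last letter is `true`. -/
lemma split_last {u : List Bool} {p : ℕ} (hpL : p + 2 ≤ u.length)
    (h : LyndonWord (u.drop p)) : u[u.length - 1]'(by omega) = true := by
  have hlen : (u.drop p).length = u.length - p := by simp
  have := lyndon_getElem_last h (by omega) (j := u.length - p - 1) (by omega)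
  rw [List.getElem_drop] at this
  rwa [getElem_idx_congr (show u.length - 1 = p + (u.length - p - 1) by omega)]

/-- If the prefix of length `p ≥ 2` is Lyndon, the first letter is `false`. -/
lemma split_head {u : List Bool} {p : ℕ} (hp : 2 ≤ p) (hpL : p ≤ u.length)
    (h : LyndonWord (u.take p)) : u[0]'(by omega) = false := by
  have hlen : (u.take p).length = p := by simp; omega
  have := lyndon_getElem_head h (by omega)
  rwa [List.getElem_take] at this

lemma facts_w (n : ℕ) (h : 1 ≤ n) :
    lyndonFacts (false :: (rep (n-1) ++ [true]))
      = (fun k => ((false :: (rep (n-1) ++ [true])).take (2*k+1),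
                   (false :: (rep (n-1) ++ [true])).drop (2*k+1))) '' ↑(Finset.range n) := by
  set w := false :: (rep (n-1) ++ [true]) with hw
  have hlen : w.length = 2 * n := w_length n h
  ext x
  constructor
  · rintro ⟨h1, h2, h3⟩
    obtain ⟨p, hp⟩ : ∃ p, p = x.1.length := ⟨_, rfl⟩
    have hp1 : 1 ≤ p := by
      rw [hp]
      have := h1.1
      cases hx : x.1 with
      | nil => exact absurd hx this
      | cons a l => simp [hx]
    have hpt : 1 ≤ x.2.length := by
      have := h2.1
      cases hx : x.2 with
      | nil => exact absurd hx this
      | cons a l => simp [hx]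
    have hL : w.length = p + x.2.length := by rw [h3]; simp [hp]
    have hpL : p ≤ 2 * n - 1 := by omega
    have htake : w.take p = x.1 := by rw [h3, hp]; exact List.take_left
    have hdrop : w.drop p = x.2 := by rw [h3, hp]; exact List.drop_left
    -- p is odd
    have hodd : p % 2 = 1 := by
      by_contra hev
      have hev' : p % 2 = 0 := by omega
      -- x.1 is Lyndon, length p ≥ 2, so its last letter, w[p-1], is true
      have hpge : 2 ≤ p := by omega
      have hlast : w[p-1]'(by omega) = true := by
        have := split_true (u := w) (p := p - 1) (by omega) (by omega)
          (by rw [show p - 1 + 1 = p by omega, htake]; exact h1)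
        exact this
      have : w[p-1]'(by omega) = wchar n (p-1) := w_getElem n h (p-1) (by rw [w_length n h]; omega)
      rw [hlast] at this
      have hne0 : p - 1 ≠ 0 := by omega
      have hne1 : p - 1 ≠ 2 * n - 1 := by omega
      rw [wchar, if_neg hne0, if_neg hne1] at this
      have : (p - 1) % 2 = 0 := by simpa using this.symm
      omega
    have hmem : (p-1)/2 < n := by omega
    refine ⟨(p-1)/2, by simpa using hmem, ?_⟩
    have hpp : 2 * ((p-1)/2) + 1 = p := by omega
    dsimp only
    rw [hpp]
    exact Prod.ext htake hdrop
  · rintro ⟨k, hk, rfl⟩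
    simp only [Finset.coe_range, Set.mem_Iio] at hk
    have ht := w_take n k hk
    have hd := w_drop n k hk
    refine ⟨?_, ?_, ?_⟩
    · dsimp only; rw [hw, ht]; exact lyndon_bw k
    · dsimp only; rw [hw, hd]; exact lyndon_aw (n - 1 - k)
    · exact (List.take_append_drop _ _).symm

lemma facts_w_ncard (n : ℕ) (h : 1 ≤ n) :
    (lyndonFacts (false :: (rep (n-1) ++ [true]))).ncard = n := by
  rw [facts_w n h]
  rw [Set.ncard_image_of_injOn, Set.ncard_coe_finset, Finset.card_range]
  intro k1 hk1 k2 hk2 he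
  simp only [Finset.coe_range, Set.mem_Iio] at hk1 hk2
  have hlen : (false :: (rep (n-1) ++ [true])).length = 2 * n := w_length n h
  have h1 := congrArg (fun q => q.1.length) he
  simp only [List.length_take, hlen] at h1
  omega

lemma part3 (n : ℕ) (hn : 3 ≤ n) (u : List Bool) (hcard : (lyndonFacts u).ncard = n) :
    2 * n ≤ u.length ∧ (u.length = 2 * n → u = wordHML n) := by
  classical
  obtain ⟨L, hL⟩ : ∃ L, L = u.length := ⟨_, rfl⟩
  set S : Finset ℕ := (Finset.Icc 1 (L-1)).filter
      (fun p => LyndonWord (u.take p) ∧ LyndonWord (u.drop p)) with hSdef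
  have hmem : ∀ p : ℕ, p ∈ S ↔
      (1 ≤ p ∧ p ≤ L - 1 ∧ LyndonWord (u.take p) ∧ LyndonWord (u.drop p)) := by
    intro p
    rw [hSdef, Finset.mem_filter, Finset.mem_Icc, and_assoc]
  have himg : lyndonFacts u = (fun p => (u.take p, u.drop p)) '' ↑S := by
    ext x
    constructor
    · rintro ⟨h1, h2, h3⟩
      obtain ⟨p, hp⟩ : ∃ p, p = x.1.length := ⟨_, rfl⟩
      have hp1 : 1 ≤ p := by
        rw [hp]; cases hx : x.1 with
        | nil => exact absurd hx h1.1
        | cons a l => simp [hx]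
      have hpt : 1 ≤ x.2.length := by
        cases hx : x.2 with
        | nil => exact absurd hx h2.1
        | cons a l => simp [hx]
      have hLL : L = p + x.2.length := by rw [hL, h3]; simp [hp]
      have htake : u.take p = x.1 := by rw [h3, hp]; exact List.take_left
      have hdrop : u.drop p = x.2 := by rw [h3, hp]; exact List.drop_left
      refine ⟨p, ?_, by dsimp only; rw [htake, hdrop]⟩
      rw [Finset.mem_coe, hmem]
      exact ⟨hp1, by omega, by rw [htake]; exact h1, by rw [hdrop]; exact h2⟩
    · rintro ⟨p, hp, rfl⟩
      rw [Finset.mem_coe, hmem] at hp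
      exact ⟨hp.2.2.1, hp.2.2.2, (List.take_append_drop _ _).symm⟩
  have hScard : S.card = n := by
    rw [himg, Set.ncard_image_of_injOn, Set.ncard_coe_finset] at hcard
    · exact hcard
    · intro p hp q hq he
      rw [Finset.mem_coe, hmem] at hp hq
      have h1 := congrArg (fun z => z.1.length) he
      simp only [List.length_take] at h1
      omega
  have hcons : ∀ p, p ∈ S → p + 1 ∈ S → False := by
    intro p hp hq
    rw [hmem] at hp hq
    have h1 : u[p]'(by omega) = true :=
      split_true hp.1 (by omega) hq.2.2.1
    have h2 : u[p]'(by omega) = false :=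
      split_false (by omega) hp.2.2.2
    exact Bool.noConfusion (h1.symm.trans h2)
  have hTsub : S ∪ S.image (· + 1) ⊆ Finset.Icc 1 L := by
    intro a ha
    rcases Finset.mem_union.mp ha with ha | ha
    · rw [hmem] at ha; rw [Finset.mem_Icc]; omega
    · obtain ⟨b, hb, rfl⟩ := Finset.mem_image.mp ha
      rw [hmem] at hb; rw [Finset.mem_Icc]; omega
  have hTdisj : Disjoint S (S.image (· + 1)) := by
    rw [Finset.disjoint_right]
    intro a ha haS
    obtain ⟨b, hb, rfl⟩ := Finset.mem_image.mp ha
    exact hcons b hb haS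
  have hTcard : (S ∪ S.image (· + 1)).card = 2 * n := by
    rw [Finset.card_union_of_disjoint hTdisj,
      Finset.card_image_of_injective _ (add_left_injective 1), hScard]
    omega
  have hLlb : 2 * n ≤ L := by
    have hcc := Finset.card_le_card hTsub
    rw [hTcard, Nat.card_Icc] at hcc
    omega
  refine ⟨by omega, ?_⟩
  intro hlen2n
  have hL2n : L = 2 * n := by omega
  have hTeq : S ∪ S.image (· + 1) = Finset.Icc 1 L :=
    Finset.eq_of_subset_of_card_le hTsub (by rw [hTcard, Nat.card_Icc]; omega)
  have hodd : ∀ j, 2*j+1 ≤ 2*n - 1 → (2*j+1 ∈ S ∧ 2*j+2 ∉ S) := by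
    intro j
    induction j with
    | zero =>
      intro hj
      have h1 : (1:ℕ) ∈ Finset.Icc 1 L := by rw [Finset.mem_Icc]; omega
      rw [← hTeq] at h1
      have h1S : (1:ℕ) ∈ S := by
        rcases Finset.mem_union.mp h1 with h2 | h2
        · exact h2
        · obtain ⟨b, hb, hb2⟩ := Finset.mem_image.mp h2
          rw [hmem] at hb
          omega
      refine ⟨by simpa using h1S, fun h2 => hcons 1 h1S (by simpa using h2)⟩
    | succ j ih =>
      intro hj
      obtain ⟨ih1, ih2⟩ := ih (by omega)
      have h1 : (2*(j+1)+1 : ℕ) ∈ Finset.Icc 1 L := by rw [Finset.mem_Icc]; omega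
      rw [← hTeq] at h1
      have h1S : 2*(j+1)+1 ∈ S := by
        rcases Finset.mem_union.mp h1 with h2 | h2
        · exact h2
        · obtain ⟨b, hb, hb2⟩ := Finset.mem_image.mp h2
          have hb3 : b = 2*j+2 := by omega
          rw [hb3] at hb
          exact absurd hb ih2
      refine ⟨h1S, fun h2 => hcons _ h1S ?_⟩
      have he : 2*(j+1)+1+1 = 2*(j+1)+2 := by omega
      rw [he]
      exact h2
  have hoddmem : ∀ p, p % 2 = 1 → p ≤ 2*n-1 → p ∈ S := by
    intro p h1 h2
    obtain ⟨j, rfl⟩ : ∃ j, p = 2*j+1 := ⟨p/2, by omega⟩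
    exact (hodd j (by omega)).1
  have hu : ∀ (j : ℕ) (hj : j < u.length), u[j] = wchar n j := by
    intro j hj
    have hjL : j < 2*n := by omega
    rcases eq_or_ne j 0 with rfl | hj0
    · have h3S : (3:ℕ) ∈ S := hoddmem 3 (by norm_num) (by omega)
      rw [hmem] at h3S
      have hh := split_head (u := u) (p := 3) (by omega) (by omega) h3S.2.2.1
      rw [hh]
      simp [wchar]
    rcases eq_or_ne j (2*n-1) with hje | hjne
    · have h1S : (1:ℕ) ∈ S := hoddmem 1 (by norm_num) (by omega)
      rw [hmem] at h1S
      have hh := split_last (u := u) (p := 1) (by omega) h1S.2.2.2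
      rw [getElem_idx_congr (show j = u.length - 1 by omega), hh]
      have : wchar n j = true := by
        unfold wchar
        rw [if_neg hj0, if_pos hje]
      rw [this]
    rcases Nat.even_or_odd j with he | ho
    · have hjev : j % 2 = 0 := Nat.even_iff.mp he
      have hpS : (j+1) ∈ S := hoddmem _ (by omega) (by omega)
      rw [hmem] at hpS
      have hh := split_true (u := u) (p := j) (by omega) (by omega) hpS.2.2.1
      rw [hh]
      have : wchar n j = true := by
        unfold wchar
        rw [if_neg hj0, if_neg hjne]
        simp [hjev]
      rw [this]
    · have hjo : j % 2 = 1 := Nat.odd_iff.mp ho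
      have hpS : j ∈ S := hoddmem _ hjo (by omega)
      rw [hmem] at hpS
      have hh := split_false (u := u) (p := j) (by omega) hpS.2.2.2
      rw [hh]
      have : wchar n j = false := by
        unfold wchar
        rw [if_neg hj0, if_neg hjne]
        simp [hjo]
      rw [this]
  rw [wordHML_eq n (by omega)]
  apply List.ext_getElem
  · rw [w_length n (by omega)]; omega
  · intro i h1 h2
    rw [hu i h1, w_getElem n (by omega) i h2]


/-- For every n ≥ 3, the shortest binary word with exactly n distinct
factorizations into two Lyndon words is 00(10)^{n-2}11, of length 2n. -/
theorem shortest_word_with_n_lyndon_factorizations (n : ℕ) (hn : 3 ≤ n) :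
    (wordHML n).length = 2 * n ∧
    (lyndonFacts (wordHML n)).ncard = n ∧
    (∀ u : List Bool, (lyndonFacts u).ncard = n →
      2 * n ≤ u.length ∧ (u.length = 2 * n → u = wordHML n)) := by
  refine ⟨?_, ?_, fun u hu => part3 n hn u hu⟩
  · rw [wordHML_eq n (by omega)]; exact w_length n (by omega)
  · rw [wordHML_eq n (by omega)]; exact facts_w_ncard n (by omega)
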